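/- Let A be a Noetherian abelian category and Z = θ + iψ a weak central charge on A. Define T_Z = {x ∈ A : for every quotient x ↠ x'', either the maximal subobject x''_0 of x'' with ψ(x''_0) = 0 equals x'', or θ(x''/x''_0) > 0}. Then T_Z is closed under quotients and extensions. -/

import Mathlib

/-!
STATEMENT 5: Let `A` be a Noetherian abelian category and `Z = θ + iψ` a weak central
charge. The class `T_Z = {x : for every quotient x ↠ x'', either x''₀ = x'' or
θ(x''/x''₀) > 0}` (where `x''₀` is the maximal subobject of `x''` killed by `ψ`) is
closed under quotients and extensions.
-/

open CategoryTheory CategoryTheory.Limits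

universe v u

/-- A weak central charge `Z = θ + iψ` on an abelian category: `θ` and `ψ` are additive
on short exact sequences, `ψ ≥ 0` on all objects, and `θ ≥ 0` on objects with `ψ = 0`. -/
structure WeakCentralCharge (C : Type u) [Category.{v} C] [Abelian C] where
  θ : C → ℝ
  ψ : C → ℝ
  θ_additive : ∀ S : ShortComplex C, S.ShortExact → θ S.X₂ = θ S.X₁ + θ S.X₃
  ψ_additive : ∀ S : ShortComplex C, S.ShortExact → ψ S.X₂ = ψ S.X₁ + ψ S.X₃
  ψ_nonneg : ∀ a : C, 0 ≤ ψ a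
  θ_nonneg : ∀ a : C, ψ a = 0 → 0 ≤ θ a

/-- `i : a₀ ⟶ a` exhibits `a₀` as the maximal subobject of `a` on which `ψ` vanishes. -/
def IsMaxPsiZeroSub {C : Type u} [Category.{v} C] [Abelian C]
    (Z : WeakCentralCharge C) {a : C} (a₀ : C) (i : a₀ ⟶ a) : Prop :=
  Mono i ∧ Z.ψ a₀ = 0 ∧
    ∀ (y : C) (j : y ⟶ a), Mono j → Z.ψ y = 0 → ∃ k : y ⟶ a₀, k ≫ i = j

 open ZeroObject

namespace WeakCentralCharge

variable {C : Type u} [Category.{v} C] [Abelian C] (Z : WeakCentralCharge C)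

lemma seMono {a b : C} (i : a ⟶ b) [Mono i] :
    (ShortComplex.mk i (cokernel.π i) (cokernel.condition i)).ShortExact where
  exact := ShortComplex.exact_of_f_is_kernel _
    (Abelian.monoIsKernelOfCokernel
      (CokernelCofork.ofπ (cokernel.π i) (cokernel.condition i)) (cokernelIsCokernel i))

lemma seEpi {a b : C} (e : a ⟶ b) [Epi e] :
    (ShortComplex.mk (kernel.ι e) e (kernel.condition e)).ShortExact where
  exact := ShortComplex.exact_of_f_is_kernel _ (kernelIsKernel e)

lemma psi_isZero {z : C} (h : IsZero z) : Z.ψ z = 0 := by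
  have hse : (ShortComplex.mk (𝟙 z) (𝟙 z) (h.eq_of_src _ _)).ShortExact :=
    { exact := ShortComplex.exact_of_isZero_X₂ _ h }
  have := Z.ψ_additive _ hse
  simpa using this.symm

lemma theta_isZero {z : C} (h : IsZero z) : Z.θ z = 0 := by
  have hse : (ShortComplex.mk (𝟙 z) (𝟙 z) (h.eq_of_src _ _)).ShortExact :=
    { exact := ShortComplex.exact_of_isZero_X₂ _ h }
  have := Z.θ_additive _ hse
  simpa using this.symm

lemma psi_iso {a b : C} (e : a ≅ b) : Z.ψ a = Z.ψ b := by
  have := Z.ψ_additive _ (seMono e.hom)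
  have hz : Z.ψ (cokernel e.hom) = 0 :=
    Z.psi_isZero (IsZero.of_iso (isZero_zero C) (cokernel.ofEpi e.hom))
  simp only [hz, add_zero] at this
  exact this.symm

lemma theta_iso {a b : C} (e : a ≅ b) : Z.θ a = Z.θ b := by
  have := Z.θ_additive _ (seMono e.hom)
  have hz : Z.θ (cokernel e.hom) = 0 :=
    Z.theta_isZero (IsZero.of_iso (isZero_zero C) (cokernel.ofEpi e.hom))
  simp only [hz, add_zero] at this
  exact this.symm

lemma psi_mono_zero {a b : C} (i : a ⟶ b) [Mono i] (h : Z.ψ b = 0) : Z.ψ a = 0 := by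
  have := Z.ψ_additive _ (seMono i)
  have h1 := Z.ψ_nonneg a
  have h2 := Z.ψ_nonneg (cokernel i)
  simp only [h] at this
  linarith

lemma psi_epi_le {a b : C} (e : a ⟶ b) [Epi e] : Z.ψ b ≤ Z.ψ a := by
  have := Z.ψ_additive _ (seEpi e)
  have h1 := Z.ψ_nonneg (kernel e)
  simp only at this
  linarith

lemma psi_biprod (a b : C) : Z.ψ (a ⊞ b) = Z.ψ a + Z.ψ b := by
  have sp : (ShortComplex.mk (biprod.inl : a ⟶ a ⊞ b) (biprod.snd : a ⊞ b ⟶ b)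
      (by simp)).Splitting :=
    { r := biprod.fst, s := biprod.inr }
  exact Z.ψ_additive _ sp.shortExact

end WeakCentralCharge


/-- The torsion class `T_Z` associated to a weak central charge `Z`: those `x` such
that for every quotient `x ↠ x''`, with maximal `ψ = 0` subobject `x''₀ ⊆ x''`, either
`x''₀ = x''` or `θ(x''/x''₀) > 0`. -/
def TZ {C : Type u} [Category.{v} C] [Abelian C] (Z : WeakCentralCharge C) (x : C) : Prop :=
  ∀ (x'' : C) (p : x ⟶ x''), Epi p →
    ∀ (x₀ : C) (i : x₀ ⟶ x''), IsMaxPsiZeroSub Z x₀ i →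
      (IsIso i ∨ 0 < Z.θ (cokernel i))

namespace WeakCentralCharge

variable {C : Type u} [Category.{v} C] [Abelian C] (Z : WeakCentralCharge C)

/-- Existence of the maximal `ψ = 0` subobject, using noetherianity. -/
lemma exists_max [Noetherian C] (a : C) :
    ∃ (a₀ : C) (i : a₀ ⟶ a), IsMaxPsiZeroSub Z a₀ i := by
  set T : Set (Subobject a) := {s | Z.ψ (s : C) = 0} with hT
  have hne : T.Nonempty := by
    refine ⟨⊥, ?_⟩
    exact Z.psi_isZero (IsZero.of_iso (isZero_zero C) Subobject.botCoeIsoZero)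
  obtain ⟨m, hm, hmin⟩ :=
    (wellFounded_gt (α := Subobject a)).has_min T hne
  refine ⟨(m : C), m.arrow, inferInstance, hm, ?_⟩
  intro y j hj hy
  haveI := hj
  set d : ((m : C) ⊞ y) ⟶ a := biprod.desc m.arrow j with hd
  have him : Z.ψ (image d) = 0 := by
    have h1 : Z.ψ (image d) ≤ Z.ψ ((m : C) ⊞ y) := Z.psi_epi_le (factorThruImage d)
    rw [Z.psi_biprod, hm, hy] at h1
    have h2 := Z.ψ_nonneg (image d)
    linarith
  have hsT : Subobject.mk (image.ι d) ∈ T := by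
    show Z.ψ _ = 0
    rw [Z.psi_iso (Subobject.underlyingIso (image.ι d))]
    exact him
  have hms : m ≤ Subobject.mk (image.ι d) := by
    refine Subobject.le_mk_of_comm (biprod.inl ≫ factorThruImage d) ?_
    rw [Category.assoc, image.fac, hd, biprod.inl_desc]
  have hsm : Subobject.mk (image.ι d) ≤ m := by
    rcases hms.lt_or_eq with h | h
    · exact absurd h (hmin _ hsT)
    · exact h.ge
  have hym : Subobject.mk j ≤ m := by
    refine le_trans ?_ hsm
    refine Subobject.mk_le_mk_of_comm (biprod.inr ≫ factorThruImage d) ?_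
    rw [Category.assoc, image.fac, hd, biprod.inr_desc]
  refine ⟨(Subobject.underlyingIso j).inv ≫ Subobject.ofLE _ _ hym, ?_⟩
  rw [Category.assoc, Subobject.ofLE_arrow, Subobject.underlyingIso_arrow]

lemma zeroMax {q : C}
    (hP : ∀ (y : C) (j : y ⟶ q), Mono j → Z.ψ y = 0 → IsZero y) :
    IsMaxPsiZeroSub Z 0 (0 : (0 : C) ⟶ q) := by
  refine ⟨⟨fun g h _ => (isZero_zero C).eq_of_tgt g h⟩,
    Z.psi_isZero (isZero_zero C), ?_⟩
  intro y j hj hy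
  refine ⟨0, ?_⟩
  rw [zero_comp]
  exact ((hP y j hj hy).eq_of_src _ _)

lemma tz_quot {x q : C} (hx : TZ Z x) (e : x ⟶ q) (he : Epi e)
    (hP : ∀ (y : C) (j : y ⟶ q), Mono j → Z.ψ y = 0 → IsZero y) :
    IsZero q ∨ 0 < Z.θ q := by
  rcases hx q e he 0 0 (Z.zeroMax hP) with h | h
  · left
    exact IsZero.of_iso (isZero_zero C) (asIso (0 : (0 : C) ⟶ q)).symm
  · right
    rwa [Z.theta_iso (cokernelZeroIsoTarget (X := (0:C)) (Y := q))] at h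

end WeakCentralCharge

theorem TZ_closed_under_quotients_and_extensions
    {C : Type u} [Category.{v} C] [Abelian C] [Noetherian C]
    (Z : WeakCentralCharge C) :
    -- closed under quotients
    (∀ {x q : C} (p : x ⟶ q), Epi p → TZ Z x → TZ Z q) ∧
    -- closed under extensions
    (∀ S : ShortComplex C, S.ShortExact → TZ Z S.X₁ → TZ Z S.X₃ → TZ Z S.X₂) := by
  constructor
  · intro x q p hp hx x'' p' hp' x₀ i hm
    haveI := hp; haveI := hp'
    exact hx x'' (p ≫ p') inferInstance x₀ i hm
  · intro S hS h1 h3 x'' p hp x₀ i hmax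
    haveI := hp
    haveI : Mono i := hmax.1
    by_cases hq : IsZero (cokernel i)
    · left
      haveI : Epi i := Preadditive.epi_of_isZero_cokernel i hq
      exact isIso_of_mono_of_epi i
    · right
      -- every ψ-zero subobject of `cokernel i` is zero
      have hP : ∀ (y : C) (j : y ⟶ cokernel i), Mono j → Z.ψ y = 0 → IsZero y := by
        intro y j hj hy
        haveI := hj
        have hcomp : (kernel.ι (pullback.snd (cokernel.π i) j) ≫
            pullback.fst (cokernel.π i) j) ≫ cokernel.π i = 0 := by
          rw [Category.assoc, pullback.condition, ← Category.assoc, kernel.condition,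
            zero_comp]
        have htfac : Abelian.monoLift i _ hcomp ≫ i =
            kernel.ι (pullback.snd (cokernel.π i) j) ≫ pullback.fst (cokernel.π i) j :=
          Abelian.monoLift_comp i _ hcomp
        haveI : Mono (Abelian.monoLift i _ hcomp ≫ i) := by
          rw [htfac]; exact mono_comp _ _
        haveI : Mono (Abelian.monoLift i _ hcomp) :=
          mono_of_mono (Abelian.monoLift i _ hcomp) i
        have hK : Z.ψ (kernel (pullback.snd (cokernel.π i) j)) = 0 :=
          Z.psi_mono_zero (Abelian.monoLift i _ hcomp) hmax.2.1
        have hPψ : Z.ψ (pullback (cokernel.π i) j) = 0 := by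
          have := Z.ψ_additive _ (WeakCentralCharge.seEpi (pullback.snd (cokernel.π i) j))
          simp only at this
          rw [hK, hy, add_zero] at this
          exact this
        obtain ⟨r, hr⟩ := hmax.2.2 (pullback (cokernel.π i) j)
          (pullback.fst (cokernel.π i) j) inferInstance hPψ
        have hzero : pullback.snd (cokernel.π i) j ≫ j = 0 := by
          rw [← pullback.condition, ← hr, Category.assoc, cokernel.condition, comp_zero]
        have hsnd : pullback.snd (cokernel.π i) j = 0 := by
          rw [← cancel_mono j, hzero, zero_comp]
        haveI : Epi (0 : pullback (cokernel.π i) j ⟶ y) := hsnd ▸ inferInstance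
        exact IsZero.of_epi_zero (pullback (cokernel.π i) j) y
      -- decompose `cokernel i` via the image of X₁
      haveI : Epi (p ≫ cokernel.π i) := epi_comp _ _
      have hθq := Z.θ_additive _ (WeakCentralCharge.seMono (image.ι (S.f ≫ p ≫ cokernel.π i)))
      have hψq := Z.ψ_additive _ (WeakCentralCharge.seMono (image.ι (S.f ≫ p ≫ cokernel.π i)))
      simp only at hθq hψq
      -- the image part
      have hP₁ : ∀ (y : C) (j : y ⟶ image (S.f ≫ p ≫ cokernel.π i)),
          Mono j → Z.ψ y = 0 → IsZero y := by
        intro y j hj hy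
        haveI := hj
        exact hP y (j ≫ image.ι (S.f ≫ p ≫ cokernel.π i)) (mono_comp _ _) hy
      have h₁' : IsZero (image (S.f ≫ p ≫ cokernel.π i)) ∨
          0 < Z.θ (image (S.f ≫ p ≫ cokernel.π i)) :=
        Z.tz_quot h1 (factorThruImage (S.f ≫ p ≫ cokernel.π i)) inferInstance hP₁
      -- the quotient part is a quotient of X₃
      have hv : S.f ≫ ((p ≫ cokernel.π i) ≫
          cokernel.π (image.ι (S.f ≫ p ≫ cokernel.π i))) = 0 := by
        have key : ∀ (zc : C) (w : cokernel i ⟶ zc),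
            image.ι (S.f ≫ p ≫ cokernel.π i) ≫ w = 0 →
            S.f ≫ (p ≫ cokernel.π i) ≫ w = 0 := by
          intro zc w hw
          rw [← Category.assoc, ← image.fac (S.f ≫ p ≫ cokernel.π i), Category.assoc,
            hw, comp_zero]
        exact key _ _ (cokernel.condition _)
      obtain ⟨u, hu⟩ := CokernelCofork.IsColimit.desc' hS.gIsCokernel
        ((p ≫ cokernel.π i) ≫ cokernel.π (image.ι (S.f ≫ p ≫ cokernel.π i))) hv
      haveI : Epi ((p ≫ cokernel.π i) ≫ cokernel.π (image.ι (S.f ≫ p ≫ cokernel.π i))) :=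
        epi_comp _ _
      haveI : Epi u := by
        have h' : S.g ≫ u = (p ≫ cokernel.π i) ≫
          cokernel.π (image.ι (S.f ≫ p ≫ cokernel.π i)) := hu
        exact epi_of_epi_fac h'
      obtain ⟨y₃, i₃, hmax₃⟩ := Z.exists_max (cokernel (image.ι (S.f ≫ p ≫ cokernel.π i)))
      haveI : Mono i₃ := hmax₃.1
      have h₃' := h3 _ u inferInstance y₃ i₃ hmax₃
      have hθ₃add := Z.θ_additive _ (WeakCentralCharge.seMono i₃)
      simp only at hθ₃add
      have hθy₃ : 0 ≤ Z.θ y₃ := Z.θ_nonneg _ hmax₃.2.1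
      have h₃'' : 0 < Z.θ (cokernel (image.ι (S.f ≫ p ≫ cokernel.π i))) ∨
          Z.ψ (cokernel (image.ι (S.f ≫ p ≫ cokernel.π i))) = 0 := by
        rcases h₃' with h | h
        · right
          rw [← Z.psi_iso (asIso i₃)]
          exact hmax₃.2.1
        · left
          rw [hθ₃add]
          linarith
      rcases h₁' with hz₁ | hθ₁
      · have hψ₁ : Z.ψ (image (S.f ≫ p ≫ cokernel.π i)) = 0 := Z.psi_isZero hz₁
        have hθ₁ : Z.θ (image (S.f ≫ p ≫ cokernel.π i)) = 0 := Z.theta_isZero hz₁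
        rcases h₃'' with h | h
        · rw [hθq, hθ₁, zero_add]
          exact h
        · exfalso
          apply hq
          apply hP (cokernel i) (𝟙 (cokernel i)) inferInstance
          rw [hψq, hψ₁, h, add_zero]
      · have hθ₃nonneg : 0 ≤ Z.θ (cokernel (image.ι (S.f ≫ p ≫ cokernel.π i))) := by
          rcases h₃'' with h | h
          · linarith
          · exact Z.θ_nonneg _ h
        rw [hθq]
        linarith
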